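/- arXiv:2010.04281 — 4 statements merged into one kernel-verified Lean document; each statement's English description precedes it below -/
import Mathlib

section
/- For any positive reals M1 and M2 and any c in (0,1], the quantity c·M1·M2 / ((M1+M2)·(M1+(1-c)·M2)) is at most (1-√(1-c))²/c. -/
theorem stmt_0 (M1 M2 c : ℝ) (hM1 : 0 < M1) (hM2 : 0 < M2) (hc0 : 0 < c) (hc1 : c ≤ 1) :
    c * M1 * M2 / ((M1 + M2) * (M1 + (1 - c) * M2)) ≤ (1 - Real.sqrt (1 - c)) ^ 2 / c := by
  set s := Real.sqrt (1 - c) with hs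
  have hs0 : 0 ≤ s := Real.sqrt_nonneg _
  have hs2 : s ^ 2 = 1 - c := Real.sq_sqrt (by linarith)
  have hs1 : s < 1 := by nlinarith
  have hd2 : 0 < M1 + (1 - c) * M2 := by nlinarith
  rw [div_le_div_iff₀ (by positivity) hc0]
  have hc' : c = 1 - s ^ 2 := by linarith
  rw [hc']
  nlinarith [mul_nonneg (sq_nonneg (1 - s)) (sq_nonneg (M1 - s * M2))]
end

section
/- Let E = {e_1,...,e_n} with n ≥ 2k+1, c ∈ (0,1], C > 1, and define f(S) = C·x_1 + (1 - c·x_1)·∑_{i=2}^{k+1} x_i + (1 - c/2)·∑_{i=k+2}^{2k+1} x_i where x_i = [e_i ∈ S]. Then f is monotone submodular with curvature at most c (for C large enough), and the deterministic greedy algorithm with budget k outputs {e_1, e_{k+2},...,e_{2k}} on f but outputs {e_2,...,e_{k+1}} on f restricted to E\{e_1}; hence the symmetric difference of the two outputs has size at least k. -/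
open scoped Classical

/-- The element of `G` with maximum value of `φ` (ties broken by least index),
returned as a singleton set; `∅` if `G = ∅`. -/
noncomputable def greedyPick (φ : ℕ → ℝ) (G : Finset ℕ) : Finset ℕ :=
  let Maxers := G.filter (fun e => ∀ e' ∈ G, φ e' ≤ φ e)
  if h : Maxers.Nonempty then {Maxers.min' h} else ∅

/-- The deterministic greedy algorithm on ground set `G` with budget `k`,
repeatedly adding the element of maximum marginal gain (ties broken by index). -/
noncomputable def greedy (f : Finset ℕ → ℝ) (G : Finset ℕ) : ℕ → Finset ℕ
  | 0 => ∅
  | k + 1 =>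
      let S := greedy f G k
      S ∪ greedyPick (fun e => f (insert e S) - f S) (G \ S)

lemma greedyPick_eq (φ : ℕ → ℝ) (G : Finset ℕ) (t : ℕ) (htG : t ∈ G)
    (hmax : ∀ e' ∈ G, φ e' ≤ φ t) (hmin : ∀ x ∈ G, φ x = φ t → t ≤ x) :
    greedyPick φ G = {t} := by
  have htM : t ∈ G.filter (fun e => ∀ e' ∈ G, φ e' ≤ φ e) :=
    Finset.mem_filter.2 ⟨htG, hmax⟩
  unfold greedyPick
  rw [dif_pos ⟨t, htM⟩]
  congr 1
  refine le_antisymm (Finset.min'_le _ _ htM) (Finset.le_min' _ _ _ ?_)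
  intro x hx
  rw [Finset.mem_filter] at hx
  exact hmin x hx.1 (le_antisymm (hmax x hx.1) (hx.2 t htG))

lemma greedy_zero (f : Finset ℕ → ℝ) (G : Finset ℕ) : greedy f G 0 = ∅ := rfl

lemma greedy_succ (f : Finset ℕ → ℝ) (G : Finset ℕ) (m : ℕ) :
    greedy f G (m+1) = greedy f G m ∪
      greedyPick (fun e => f (insert e (greedy f G m)) - f (greedy f G m)) (G \ greedy f G m) :=
  rfl

section
variable {k n : ℕ} {c C : ℝ}

lemma sum_ind_insert' (S : Finset ℕ) (e : ℕ) (he : e ∉ S) (R : Finset ℕ) :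
    (∑ i ∈ R, if i ∈ insert e S then (1:ℝ) else 0)
      = (∑ i ∈ R, if i ∈ S then (1:ℝ) else 0) + (if e ∈ R then 1 else 0) := by
  rw [← Finset.sum_ite_eq' R e (fun _ => (1:ℝ)), ← Finset.sum_add_distrib]
  refine Finset.sum_congr rfl fun i _ => ?_
  by_cases h : i = e
  · subst h; simp [he]
  · simp [Finset.mem_insert, h]

lemma gain_eq (f : Finset ℕ → ℝ)
    (hf : ∀ S : Finset ℕ,
      f S = C * (if 1 ∈ S then 1 else 0)
        + (1 - c * (if 1 ∈ S then 1 else 0)) *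
            (∑ i ∈ Finset.Icc 2 (k + 1), if i ∈ S then (1 : ℝ) else 0)
        + (1 - c / 2) *
            (∑ i ∈ Finset.Icc (k + 2) (2 * k + 1), if i ∈ S then (1 : ℝ) else 0))
    (S : Finset ℕ) (e : ℕ) (he : e ∉ S) :
    f (insert e S) - f S =
      (if e = 1 then C - c * (∑ i ∈ Finset.Icc 2 (k+1), if i ∈ S then (1:ℝ) else 0) else 0)
      + (if e ∈ Finset.Icc 2 (k+1) then 1 - c * (if 1 ∈ S then (1:ℝ) else 0) else 0)
      + (if e ∈ Finset.Icc (k+2) (2*k+1) then 1 - c/2 else 0) := by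
  rw [hf, hf, sum_ind_insert' S e he, sum_ind_insert' S e he]
  by_cases h1 : e = 1
  · subst h1
    have h2 : (1:ℕ) ∉ Finset.Icc 2 (k+1) := by simp
    have h3 : (1:ℕ) ∉ Finset.Icc (k+2) (2*k+1) := by simp [Finset.mem_Icc]
    simp only [Finset.mem_insert_self, if_pos, h2, h3, if_neg, if_false, he,
      Finset.mem_insert, true_or, if_true]
    ring
  · have h1' : (1 ∈ insert e S) = (1 ∈ S) := by
      simp [Finset.mem_insert, Ne.symm h1]
    simp only [h1', if_neg h1]
    by_cases hb : e ∈ Finset.Icc 2 (k+1) <;> by_cases hd : e ∈ Finset.Icc (k+2) (2*k+1) <;>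
      simp only [hb, hd, if_true, if_false] <;> ring

lemma sum_ind_nonneg (R S : Finset ℕ) : (0:ℝ) ≤ ∑ i ∈ R, if i ∈ S then (1:ℝ) else 0 :=
  Finset.sum_nonneg fun i _ => by split <;> norm_num

lemma sum_ind_le_card (R S : Finset ℕ) :
    (∑ i ∈ R, if i ∈ S then (1:ℝ) else 0) ≤ R.card := by
  calc (∑ i ∈ R, if i ∈ S then (1:ℝ) else 0) ≤ ∑ i ∈ R, (1:ℝ) :=
        Finset.sum_le_sum fun i _ => by split <;> norm_num
    _ = R.card := by simp

lemma sum_ind_mono (R A B : Finset ℕ) (h : A ⊆ B) :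
    (∑ i ∈ R, if i ∈ A then (1:ℝ) else 0) ≤ ∑ i ∈ R, if i ∈ B then (1:ℝ) else 0 :=
  Finset.sum_le_sum fun i _ => by
    by_cases hi : i ∈ A
    · simp [hi, h hi]
    · simp only [hi, if_false]; split <;> norm_num

lemma sum_ind_modular (R A B : Finset ℕ) :
    (∑ i ∈ R, if i ∈ A ∪ B then (1:ℝ) else 0) + (∑ i ∈ R, if i ∈ A ∩ B then (1:ℝ) else 0)
      = (∑ i ∈ R, if i ∈ A then (1:ℝ) else 0) + (∑ i ∈ R, if i ∈ B then (1:ℝ) else 0) := by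
  rw [← Finset.sum_add_distrib, ← Finset.sum_add_distrib]
  refine Finset.sum_congr rfl fun i _ => ?_
  by_cases hA : i ∈ A <;> by_cases hB : i ∈ B <;>
    simp [Finset.mem_union, Finset.mem_inter, hA, hB]

lemma f_mono (hc0 : 0 < c) (hc1 : c ≤ 1) (hC : (k:ℝ) ≤ C) (f : Finset ℕ → ℝ)
    (hf : ∀ S : Finset ℕ,
      f S = C * (if 1 ∈ S then 1 else 0)
        + (1 - c * (if 1 ∈ S then 1 else 0)) *
            (∑ i ∈ Finset.Icc 2 (k + 1), if i ∈ S then (1 : ℝ) else 0)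
        + (1 - c / 2) *
            (∑ i ∈ Finset.Icc (k + 2) (2 * k + 1), if i ∈ S then (1 : ℝ) else 0))
    (A B : Finset ℕ) (hAB : A ⊆ B) : f A ≤ f B := by
  rw [hf A, hf B]
  set bA := ∑ i ∈ Finset.Icc 2 (k+1), if i ∈ A then (1:ℝ) else 0 with hbA
  set bB := ∑ i ∈ Finset.Icc 2 (k+1), if i ∈ B then (1:ℝ) else 0 with hbB
  set dA := ∑ i ∈ Finset.Icc (k+2) (2*k+1), if i ∈ A then (1:ℝ) else 0 with hdA
  set dB := ∑ i ∈ Finset.Icc (k+2) (2*k+1), if i ∈ B then (1:ℝ) else 0 with hdB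
  have hbm : bA ≤ bB := sum_ind_mono _ _ _ hAB
  have hdm : dA ≤ dB := sum_ind_mono _ _ _ hAB
  have hb0 : (0:ℝ) ≤ bB := sum_ind_nonneg _ _
  have hcard : (Finset.Icc 2 (k+1)).card = k := by rw [Nat.card_Icc]; omega
  have hbk : bB ≤ (k:ℝ) := by
    have := sum_ind_le_card (Finset.Icc 2 (k+1)) B
    rwa [hcard] at this
  have hd2 : (1-c/2)*dA ≤ (1-c/2)*dB := by nlinarith
  by_cases hA : 1 ∈ A
  · have hB : 1 ∈ B := hAB hA
    simp only [hA, hB, if_pos]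
    nlinarith [mul_nonneg (by linarith : (0:ℝ) ≤ 1-c) (by linarith : (0:ℝ) ≤ bB - bA)]
  · by_cases hB : 1 ∈ B
    · simp only [hA, hB, if_pos, if_neg, not_false_iff]
      have hcb : c * bB ≤ bB := by nlinarith
      nlinarith
    · simp only [hA, hB, if_neg, not_false_iff]
      nlinarith

lemma f_submod (hc0 : 0 < c) (hc1 : c ≤ 1) (f : Finset ℕ → ℝ)
    (hf : ∀ S : Finset ℕ,
      f S = C * (if 1 ∈ S then 1 else 0)
        + (1 - c * (if 1 ∈ S then 1 else 0)) *
            (∑ i ∈ Finset.Icc 2 (k + 1), if i ∈ S then (1 : ℝ) else 0)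
        + (1 - c / 2) *
            (∑ i ∈ Finset.Icc (k + 2) (2 * k + 1), if i ∈ S then (1 : ℝ) else 0))
    (A B : Finset ℕ) : f (A ∪ B) + f (A ∩ B) ≤ f A + f B := by
  rw [hf A, hf B, hf (A ∪ B), hf (A ∩ B)]
  set bA := ∑ i ∈ Finset.Icc 2 (k+1), if i ∈ A then (1:ℝ) else 0 with hbA
  set bB := ∑ i ∈ Finset.Icc 2 (k+1), if i ∈ B then (1:ℝ) else 0 with hbB
  set bU := ∑ i ∈ Finset.Icc 2 (k+1), if i ∈ A ∪ B then (1:ℝ) else 0 with hbU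
  set bI := ∑ i ∈ Finset.Icc 2 (k+1), if i ∈ A ∩ B then (1:ℝ) else 0 with hbI
  set dA := ∑ i ∈ Finset.Icc (k+2) (2*k+1), if i ∈ A then (1:ℝ) else 0 with hdA
  set dB := ∑ i ∈ Finset.Icc (k+2) (2*k+1), if i ∈ B then (1:ℝ) else 0 with hdB
  set dU := ∑ i ∈ Finset.Icc (k+2) (2*k+1), if i ∈ A ∪ B then (1:ℝ) else 0 with hdU
  set dI := ∑ i ∈ Finset.Icc (k+2) (2*k+1), if i ∈ A ∩ B then (1:ℝ) else 0 with hdI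
  have hbmod : bU + bI = bA + bB := sum_ind_modular _ _ _
  have hdmod : dU + dI = dA + dB := sum_ind_modular _ _ _
  have hbmA : bA ≤ bU := sum_ind_mono _ _ _ Finset.subset_union_left
  have hbmB : bB ≤ bU := sum_ind_mono _ _ _ Finset.subset_union_right
  by_cases hA : 1 ∈ A <;> by_cases hB : 1 ∈ B
  · have hU : 1 ∈ A ∪ B := Finset.mem_union_left _ hA
    have hI : 1 ∈ A ∩ B := Finset.mem_inter.2 ⟨hA, hB⟩
    simp only [hA, hB, hU, hI, if_pos]
    nlinarith
  · have hU : 1 ∈ A ∪ B := Finset.mem_union_left _ hA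
    have hI : 1 ∉ A ∩ B := fun h => hB (Finset.mem_inter.1 h).2
    simp only [hA, hB, hU, hI, if_pos, if_neg, not_false_iff]
    nlinarith [mul_nonneg hc0.le (by linarith : (0:ℝ) ≤ bU - bA)]
  · have hU : 1 ∈ A ∪ B := Finset.mem_union_right _ hB
    have hI : 1 ∉ A ∩ B := fun h => hA (Finset.mem_inter.1 h).1
    simp only [hA, hB, hU, hI, if_pos, if_neg, not_false_iff]
    nlinarith [mul_nonneg hc0.le (by linarith : (0:ℝ) ≤ bU - bB)]
  · have hU : (1 ∈ A ∪ B) = False := by simp [Finset.mem_union, hA, hB]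
    have hI : 1 ∉ A ∩ B := fun h => hA (Finset.mem_inter.1 h).1
    simp only [hA, hB, hU, hI, if_neg, not_false_iff, if_false]
    nlinarith

lemma f_singleton (f : Finset ℕ → ℝ)
    (hf : ∀ S : Finset ℕ,
      f S = C * (if 1 ∈ S then 1 else 0)
        + (1 - c * (if 1 ∈ S then 1 else 0)) *
            (∑ i ∈ Finset.Icc 2 (k + 1), if i ∈ S then (1 : ℝ) else 0)
        + (1 - c / 2) *
            (∑ i ∈ Finset.Icc (k + 2) (2 * k + 1), if i ∈ S then (1 : ℝ) else 0))
    (e : ℕ) :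
    f {e} = (if e = 1 then C else 0) + (if e ∈ Finset.Icc 2 (k+1) then (1:ℝ) else 0)
      + (if e ∈ Finset.Icc (k+2) (2*k+1) then 1 - c/2 else 0) := by
  have h0 : f ∅ = 0 := by rw [hf]; simp
  have hg := gain_eq f hf ∅ e (Finset.notMem_empty e)
  simp only [Finset.notMem_empty, if_false, Finset.sum_const_zero, mul_zero, sub_zero, h0] at hg
  have h1 : ({e} : Finset ℕ) = insert e ∅ := rfl
  rw [h1, hg]

lemma f_curv (hk : 1 ≤ k) (hn : 2*k+1 ≤ n) (hc0 : 0 < c) (hc1 : c ≤ 1) (hC : (k:ℝ) ≤ C)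
    (f : Finset ℕ → ℝ)
    (hf : ∀ S : Finset ℕ,
      f S = C * (if 1 ∈ S then 1 else 0)
        + (1 - c * (if 1 ∈ S then 1 else 0)) *
            (∑ i ∈ Finset.Icc 2 (k + 1), if i ∈ S then (1 : ℝ) else 0)
        + (1 - c / 2) *
            (∑ i ∈ Finset.Icc (k + 2) (2 * k + 1), if i ∈ S then (1 : ℝ) else 0)) :
    ∀ e ∈ Finset.Icc 1 n,
      (1 - c) * f {e} ≤ f (Finset.Icc 1 n) - f ((Finset.Icc 1 n).erase e) := by
  intro e hmem
  have he := Finset.mem_Icc.1 hmem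
  have hins : insert e ((Finset.Icc 1 n).erase e) = Finset.Icc 1 n := Finset.insert_erase hmem
  have hgain := gain_eq f hf ((Finset.Icc 1 n).erase e) e (Finset.notMem_erase e _)
  rw [hins] at hgain
  rw [hgain, f_singleton f hf]
  by_cases h1 : e = 1
  · subst h1
    have h2 : (1:ℕ) ∉ Finset.Icc 2 (k+1) := by simp
    have h3 : (1:ℕ) ∉ Finset.Icc (k+2) (2*k+1) := by simp [Finset.mem_Icc]
    have hbS : (∑ i ∈ Finset.Icc 2 (k+1),
        if i ∈ (Finset.Icc 1 n).erase 1 then (1:ℝ) else 0) = k := by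
      have hall : ∀ i ∈ Finset.Icc 2 (k+1),
          (if i ∈ (Finset.Icc 1 n).erase 1 then (1:ℝ) else 0) = 1 := by
        intro i hi
        rw [Finset.mem_Icc] at hi
        rw [if_pos]
        rw [Finset.mem_erase, Finset.mem_Icc]
        omega
      rw [Finset.sum_congr rfl hall, Finset.sum_const, Nat.card_Icc]
      have hkk : k + 1 + 1 - 2 = k := by omega
      rw [hkk]; simp
    rw [hbS]
    norm_num [h2, h3]
    nlinarith [mul_le_mul_of_nonneg_left hC hc0.le]
  · by_cases h2 : e ≤ k + 1
    · have hb : e ∈ Finset.Icc 2 (k+1) := by rw [Finset.mem_Icc]; omega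
      have hd : e ∉ Finset.Icc (k+2) (2*k+1) := by rw [Finset.mem_Icc]; omega
      have hi1 : (1:ℕ) ∈ (Finset.Icc 1 n).erase e := by
        rw [Finset.mem_erase, Finset.mem_Icc]; omega
      simp only [h1, hb, hd, hi1, if_pos, if_neg, not_false_iff, if_false, if_true]
      linarith
    · by_cases h3 : e ≤ 2*k + 1
      · have hb : e ∉ Finset.Icc 2 (k+1) := by rw [Finset.mem_Icc]; omega
        have hd : e ∈ Finset.Icc (k+2) (2*k+1) := by rw [Finset.mem_Icc]; omega
        simp only [h1, hb, hd, if_pos, if_neg, not_false_iff, if_false, if_true]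
        nlinarith
      · have hb : e ∉ Finset.Icc 2 (k+1) := by rw [Finset.mem_Icc]; omega
        have hd : e ∉ Finset.Icc (k+2) (2*k+1) := by rw [Finset.mem_Icc]; omega
        simp only [h1, hb, hd, if_neg, not_false_iff, if_false]
        norm_num

lemma greedy_full (hk : 1 ≤ k) (hn : 2*k+1 ≤ n) (hc0 : 0 < c) (hc1 : c ≤ 1)
    (hC : (k:ℝ) + 2 ≤ C) (f : Finset ℕ → ℝ)
    (hf : ∀ S : Finset ℕ,
      f S = C * (if 1 ∈ S then 1 else 0)
        + (1 - c * (if 1 ∈ S then 1 else 0)) *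
            (∑ i ∈ Finset.Icc 2 (k + 1), if i ∈ S then (1 : ℝ) else 0)
        + (1 - c / 2) *
            (∑ i ∈ Finset.Icc (k + 2) (2 * k + 1), if i ∈ S then (1 : ℝ) else 0)) :
    ∀ m, 1 ≤ m → m ≤ k →
      greedy f (Finset.Icc 1 n) m = insert 1 (Finset.Icc (k+2) (k+m)) := by
  intro m
  induction m with
  | zero => omega
  | succ m ih =>
    intro _ hmk
    have hk1 : (1:ℝ) ≤ (k:ℝ) := by exact_mod_cast hk
    by_cases hm0 : m = 0
    · subst hm0
      have hIempty : Finset.Icc (k+2) (k+1) = ∅ := Finset.Icc_eq_empty (by omega)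
      rw [greedy_succ, greedy_zero, Finset.sdiff_empty, Finset.empty_union, hIempty]
      rw [greedyPick_eq _ _ 1 (Finset.mem_Icc.2 (by omega)) ?_ ?_]
      · simp
      · intro e' he'
        rw [gain_eq f hf ∅ e' (Finset.notMem_empty e'),
            gain_eq f hf ∅ 1 (Finset.notMem_empty 1)]
        have h2 : (1:ℕ) ∉ Finset.Icc 2 (k+1) := by simp
        have h3 : (1:ℕ) ∉ Finset.Icc (k+2) (2*k+1) := by simp [Finset.mem_Icc]
        simp only [Finset.notMem_empty, if_false, Finset.sum_const_zero, mul_zero, sub_zero,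
          h2, h3, if_neg, not_false_iff, if_pos rfl, add_zero, if_true]
        by_cases hb : e' = 1
        · simp [hb]
        · rw [if_neg hb]
          by_cases h4 : e' ∈ Finset.Icc 2 (k+1) <;> by_cases h5 : e' ∈ Finset.Icc (k+2) (2*k+1) <;>
            simp only [h4, h5, if_true, if_false] <;> linarith
      · intro x hx _
        exact (Finset.mem_Icc.1 hx).1
    · have hm1 : 1 ≤ m := by omega
      have hS := ih hm1 (by omega)
      rw [greedy_succ, hS]
      set S := insert 1 (Finset.Icc (k+2) (k+m)) with hSdef
      have h1S : 1 ∈ S := Finset.mem_insert_self 1 _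
      have htS : k+m+1 ∉ S := by
        simp only [hSdef, Finset.mem_insert, Finset.mem_Icc]
        omega
      have htG : k+m+1 ∈ Finset.Icc 1 n \ S :=
        Finset.mem_sdiff.2 ⟨Finset.mem_Icc.2 (by omega), htS⟩
      have ht1 : ¬(k+m+1 = 1) := by omega
      have htR2 : k+m+1 ∉ Finset.Icc 2 (k+1) := by rw [Finset.mem_Icc]; omega
      have htR3 : k+m+1 ∈ Finset.Icc (k+2) (2*k+1) := by rw [Finset.mem_Icc]; omega
      rw [greedyPick_eq _ _ (k+m+1) htG ?_ ?_]
      · ext a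
        simp only [Finset.mem_union, Finset.mem_insert, Finset.mem_singleton, hSdef,
          Finset.mem_Icc]
        omega
      · intro e' he'
        rw [Finset.mem_sdiff] at he'
        have he1 : ¬ (e' = 1) := fun h => he'.2 (h ▸ h1S)
        rw [gain_eq f hf S e' he'.2, gain_eq f hf S _ htS]
        simp only [ht1, htR2, htR3, he1, h1S, if_neg, not_false_iff, if_pos, if_false, if_true,
          zero_add, add_zero, mul_one]
        by_cases h4 : e' ∈ Finset.Icc 2 (k+1) <;> by_cases h5 : e' ∈ Finset.Icc (k+2) (2*k+1) <;>
          simp only [h4, h5, if_true, if_false]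
        · rw [Finset.mem_Icc] at h4 h5; omega
        · linarith
        · linarith
        · linarith
      · intro x hx hval
        rw [Finset.mem_sdiff] at hx
        have hx1 : ¬ (x = 1) := fun h => hx.2 (h ▸ h1S)
        rw [gain_eq f hf S x hx.2, gain_eq f hf S _ htS] at hval
        simp only [ht1, htR2, htR3, hx1, h1S, if_neg, not_false_iff, if_pos, if_false, if_true,
          zero_add, add_zero, mul_one] at hval
        by_cases h4 : x ∈ Finset.Icc 2 (k+1) <;> by_cases h5 : x ∈ Finset.Icc (k+2) (2*k+1) <;>
          simp only [h4, h5, if_true, if_false] at hval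
        · rw [Finset.mem_Icc] at h4 h5; omega
        · linarith
        · have hxS := hx.2
          simp only [hSdef, Finset.mem_insert, Finset.mem_Icc, not_or, not_and, not_le] at hxS
          rw [Finset.mem_Icc] at h5
          omega
        · linarith

lemma greedy_restricted (hk : 1 ≤ k) (hn : 2*k+1 ≤ n) (hc0 : 0 < c) (hc1 : c ≤ 1)
    (f : Finset ℕ → ℝ)
    (hf : ∀ S : Finset ℕ,
      f S = C * (if 1 ∈ S then 1 else 0)
        + (1 - c * (if 1 ∈ S then 1 else 0)) *
            (∑ i ∈ Finset.Icc 2 (k + 1), if i ∈ S then (1 : ℝ) else 0)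
        + (1 - c / 2) *
            (∑ i ∈ Finset.Icc (k + 2) (2 * k + 1), if i ∈ S then (1 : ℝ) else 0)) :
    ∀ m, m ≤ k →
      greedy f ((Finset.Icc 1 n).erase 1) m = Finset.Icc 2 (m+1) := by
  intro m
  induction m with
  | zero =>
    intro _
    rw [greedy_zero]
    exact (Finset.Icc_eq_empty (by omega)).symm
  | succ m ih =>
    intro hmk
    have hS := ih (by omega)
    rw [greedy_succ, hS]
    set S := Finset.Icc 2 (m+1) with hSdef
    have h1S : (1:ℕ) ∉ S := by simp [hSdef, Finset.mem_Icc]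
    have htS : m+2 ∉ S := by simp [hSdef, Finset.mem_Icc]
    have htG : m+2 ∈ (Finset.Icc 1 n).erase 1 \ S := by
      rw [Finset.mem_sdiff, Finset.mem_erase, Finset.mem_Icc]
      exact ⟨⟨by omega, by omega, by omega⟩, htS⟩
    have ht1 : ¬(m+2 = 1) := by omega
    have htR2 : m+2 ∈ Finset.Icc 2 (k+1) := by rw [Finset.mem_Icc]; omega
    have htR3 : m+2 ∉ Finset.Icc (k+2) (2*k+1) := by rw [Finset.mem_Icc]; omega
    rw [greedyPick_eq _ _ (m+2) htG ?_ ?_]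
    · ext a
      simp only [Finset.mem_union, Finset.mem_singleton, hSdef, Finset.mem_Icc]
      omega
    · intro e' he'
      rw [Finset.mem_sdiff, Finset.mem_erase] at he'
      have he1 : ¬ (e' = 1) := he'.1.1
      rw [gain_eq f hf S e' he'.2, gain_eq f hf S _ htS]
      simp only [ht1, htR2, htR3, he1, h1S, if_neg, not_false_iff, if_pos, if_false, if_true,
        zero_add, add_zero, mul_zero, sub_zero]
      by_cases h4 : e' ∈ Finset.Icc 2 (k+1) <;> by_cases h5 : e' ∈ Finset.Icc (k+2) (2*k+1) <;>
        simp only [h4, h5, if_true, if_false]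
      · rw [Finset.mem_Icc] at h4 h5; omega
      · linarith
      · linarith
      · linarith
    · intro x hx hval
      rw [Finset.mem_sdiff, Finset.mem_erase] at hx
      have hx1 : ¬ (x = 1) := hx.1.1
      rw [gain_eq f hf S x hx.2, gain_eq f hf S _ htS] at hval
      simp only [ht1, htR2, htR3, hx1, h1S, if_neg, not_false_iff, if_pos, if_false, if_true,
        zero_add, add_zero, mul_zero, sub_zero] at hval
      by_cases h4 : x ∈ Finset.Icc 2 (k+1) <;> by_cases h5 : x ∈ Finset.Icc (k+2) (2*k+1) <;>
        simp only [h4, h5, if_true, if_false] at hval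
      · rw [Finset.mem_Icc] at h4 h5; omega
      · have hxS := hx.2
        simp only [hSdef, Finset.mem_Icc, not_and, not_le] at hxS
        rw [Finset.mem_Icc] at h4
        omega
      · linarith
      · linarith

end

theorem stmt_9 (n k : ℕ) (hk : 1 ≤ k) (hn : 2 * k + 1 ≤ n)
    (c : ℝ) (hc0 : 0 < c) (hc1 : c ≤ 1) :
    ∃ C0 : ℝ, 1 < C0 ∧ ∀ C : ℝ, C0 ≤ C →
      ∀ f : Finset ℕ → ℝ,
        (∀ S : Finset ℕ,
          f S = C * (if 1 ∈ S then 1 else 0)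
            + (1 - c * (if 1 ∈ S then 1 else 0)) *
                (∑ i ∈ Finset.Icc 2 (k + 1), if i ∈ S then (1 : ℝ) else 0)
            + (1 - c / 2) *
                (∑ i ∈ Finset.Icc (k + 2) (2 * k + 1), if i ∈ S then (1 : ℝ) else 0)) →
        (∀ A B : Finset ℕ, A ⊆ B → f A ≤ f B) ∧
        (∀ A B : Finset ℕ, f (A ∪ B) + f (A ∩ B) ≤ f A + f B) ∧
        (∀ e ∈ Finset.Icc 1 n,
          (1 - c) * f {e} ≤ f (Finset.Icc 1 n) - f ((Finset.Icc 1 n).erase e)) ∧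
        greedy f (Finset.Icc 1 n) k = insert 1 (Finset.Icc (k + 2) (2 * k)) ∧
        greedy f ((Finset.Icc 1 n).erase 1) k = Finset.Icc 2 (k + 1) ∧
        k ≤ ((greedy f (Finset.Icc 1 n) k \ greedy f ((Finset.Icc 1 n).erase 1) k)
              ∪ (greedy f ((Finset.Icc 1 n).erase 1) k \ greedy f (Finset.Icc 1 n) k)).card := by
  refine ⟨(k:ℝ) + 2, by linarith [Nat.cast_nonneg (α := ℝ) k], ?_⟩
  intro C hC f hf
  have hCk : (k:ℝ) ≤ C := by linarith [Nat.cast_nonneg (α := ℝ) k]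
  have h2k : k + k = 2 * k := by omega
  have hg1 : greedy f (Finset.Icc 1 n) k = insert 1 (Finset.Icc (k + 2) (2 * k)) := by
    have := greedy_full hk hn hc0 hc1 hC f hf k hk le_rfl
    rwa [h2k] at this
  have hg2 : greedy f ((Finset.Icc 1 n).erase 1) k = Finset.Icc 2 (k + 1) :=
    greedy_restricted hk hn hc0 hc1 f hf k le_rfl
  refine ⟨f_mono hc0 hc1 hCk f hf, f_submod hc0 hc1 f hf, f_curv hk hn hc0 hc1 hCk f hf,
    hg1, hg2, ?_⟩
  rw [hg1, hg2]
  set A := insert 1 (Finset.Icc (k + 2) (2 * k)) with hA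
  set B := Finset.Icc 2 (k + 1) with hB
  have hdisj : ∀ a ∈ A, a ∉ B := by
    intro a ha
    simp only [hA, Finset.mem_insert, Finset.mem_Icc] at ha
    simp only [hB, Finset.mem_Icc]
    omega
  have hsub : A ⊆ A \ B ∪ B \ A := fun a ha =>
    Finset.mem_union_left _ (Finset.mem_sdiff.2 ⟨ha, hdisj a ha⟩)
  have hcardA : A.card = k := by
    rw [hA, Finset.card_insert_of_notMem (by rw [Finset.mem_Icc]; omega), Nat.card_Icc]
    omega
  calc k = A.card := hcardA.symm
    _ ≤ _ := Finset.card_le_card hsub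
end

section
/- Let f : 2^E → ℝ_{≥0} be monotone submodular with f(∅) = 0, let OPT be an optimal solution of size k, and let S ⊆ E with |S| ≤ k and |E| = n. If an element e is chosen from E \ S with probability proportional to its marginal gain f_S(e) = f(S∪{e}) - f(S), then f(OPT) - f(S) ≤ (n - k)·E[f(S∪{e}) - f(S)]. -/
lemma marginal_bound (E : Type*) [Fintype E] [DecidableEq E]
    (f : Finset E → ℝ)
    (hsub : ∀ A B : Finset E, f (A ∪ B) + f (A ∩ B) ≤ f A + f B)
    (S : Finset E) :
    ∀ T : Finset E, f (S ∪ T) - f S ≤ ∑ e ∈ T \ S, (f (insert e S) - f S) := by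
  intro T
  induction T using Finset.induction with
  | empty => simp
  | @insert a T ha ih =>
    by_cases haS : a ∈ S
    · have h1 : S ∪ insert a T = S ∪ T := by
        ext x; simp only [Finset.mem_union, Finset.mem_insert]
        constructor
        · rintro (h | rfl | h) <;> simp_all
        · rintro (h | h) <;> simp_all
      have h2 : insert a T \ S = T \ S := by
        ext x; simp only [Finset.mem_sdiff, Finset.mem_insert]
        constructor
        · rintro ⟨rfl | h, h2⟩ <;> simp_all
        · rintro ⟨h1, h2⟩; exact ⟨Or.inr h1, h2⟩
      rw [h1, h2]; exact ih
    · have h2 : insert a T \ S = insert a (T \ S) := by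
        ext x; simp only [Finset.mem_sdiff, Finset.mem_insert]
        constructor
        · rintro ⟨rfl | h, h2⟩
          · exact Or.inl rfl
          · exact Or.inr ⟨h, h2⟩
        · rintro (rfl | ⟨h1, h2⟩)
          · exact ⟨Or.inl rfl, haS⟩
          · exact ⟨Or.inr h1, h2⟩
      rw [h2, Finset.sum_insert (by simp [ha])]
      have hcap : (insert a S) ∩ (S ∪ T) = S := by
        ext x
        simp only [Finset.mem_inter, Finset.mem_insert, Finset.mem_union]
        constructor
        · rintro ⟨rfl | h, h2 | h2⟩ <;> simp_all
        · intro h; exact ⟨Or.inr h, Or.inl h⟩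
      have hcup : (insert a S) ∪ (S ∪ T) = S ∪ insert a T := by
        ext x
        simp only [Finset.mem_union, Finset.mem_insert]
        tauto
      have := hsub (insert a S) (S ∪ T)
      rw [hcap, hcup] at this
      linarith

theorem stmt_11 (E : Type*) [Fintype E] [DecidableEq E]
    (f : Finset E → ℝ)
    (hmono : ∀ A B : Finset E, A ⊆ B → f A ≤ f B)
    (hsub : ∀ A B : Finset E, f (A ∪ B) + f (A ∩ B) ≤ f A + f B)
    (hnonneg : ∀ S : Finset E, 0 ≤ f S) (hempty : f ∅ = 0)
    (k : ℕ) (OPT : Finset E) (hcard : OPT.card = k)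
    (hopt : ∀ T : Finset E, T.card ≤ k → f T ≤ f OPT)
    (S : Finset E) (hS : S.card ≤ k) :
    f OPT - f S ≤
      ((Finset.univ \ S).card : ℝ) *
        ((∑ e ∈ Finset.univ \ S, (f (insert e S) - f S) ^ 2) /
          (∑ e ∈ Finset.univ \ S, (f (insert e S) - f S))) := by
  set g : E → ℝ := fun e => f (insert e S) - f S with hg
  have hgnn : ∀ e, 0 ≤ g e := fun e => by
    have := hmono S (insert e S) (Finset.subset_insert e S)
    simp [hg]; linarith
  set M : ℝ := ∑ e ∈ Finset.univ \ S, g e with hM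
  set Q : ℝ := ∑ e ∈ Finset.univ \ S, g e ^ 2 with hQ
  have hbound : f OPT - f S ≤ M := by
    have h1 : f OPT ≤ f (S ∪ OPT) := hmono _ _ Finset.subset_union_right
    have h2 := marginal_bound E f hsub S OPT
    have h3 : ∑ e ∈ OPT \ S, g e ≤ M :=
      Finset.sum_le_sum_of_subset_of_nonneg
        (fun x hx => by simp_all [Finset.mem_sdiff]) (fun e _ _ => hgnn e)
    calc f OPT - f S ≤ f (S ∪ OPT) - f S := by linarith
      _ ≤ ∑ e ∈ OPT \ S, g e := h2
      _ ≤ M := h3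
  have hMnn : 0 ≤ M := Finset.sum_nonneg fun e _ => hgnn e
  rcases eq_or_lt_of_le hMnn with hM0 | hMpos
  · -- M = 0: all gains zero, Q = 0
    have hall : ∀ e ∈ Finset.univ \ S, g e = 0 := by
      intro e he
      exact le_antisymm ((Finset.sum_eq_zero_iff_of_nonneg
        (fun e _ => hgnn e)).mp hM0.symm e he).le (hgnn e)
    have hQ0 : Q = 0 := Finset.sum_eq_zero fun e he => by rw [hall e he]; ring
    rw [hQ0]
    simp only [zero_div, mul_zero]
    linarith
  · have hCS : M ^ 2 ≤ ((Finset.univ \ S).card : ℝ) * Q := by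
      have := Finset.sum_mul_sq_le_sq_mul_sq (Finset.univ \ S) (fun _ => (1 : ℝ)) g
      simp only [one_pow, one_mul, Finset.sum_const, nsmul_eq_mul, mul_one] at this
      exact this
    rw [mul_div_assoc', le_div_iff₀ hMpos]
    nlinarith
end

section
/- Define h : [1-c,1]^R → ℝ for a finite index set R, weights m'(e) > 0, and c ∈ (0,1] by h(α) = (1/2)·∑_{e∈R} | α(e)·m'(e)/(∑_{e'} α(e')·m'(e')) - m'(e)/(∑_{e'} m'(e')) |. Then h(α) ≤ (1-√(1-c))²/c for all α ∈ [1-c,1]^R. -/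
theorem stmt_16 (R : Type*) [Fintype R] [Nonempty R]
    (m' : R → ℝ) (hm' : ∀ e, 0 < m' e) (c : ℝ) (hc0 : 0 < c) (hc1 : c ≤ 1)
    (α : R → ℝ) (hα : ∀ e, 1 - c ≤ α e ∧ α e ≤ 1) :
    (1 / 2) * ∑ e : R, |α e * m' e / (∑ e' : R, α e' * m' e')
        - m' e / (∑ e' : R, m' e')|
      ≤ (1 - Real.sqrt (1 - c)) ^ 2 / c := by
  set S := ∑ e' : R, m' e' with hS
  set T := ∑ e' : R, α e' * m' e' with hT
  have hSpos : 0 < S := Finset.sum_pos (fun e _ => hm' e) Finset.univ_nonempty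
  have hα0 : ∀ e, 0 ≤ α e := fun e => by linarith [(hα e).1]
  have hTnn : 0 ≤ T := Finset.sum_nonneg (fun e _ => mul_nonneg (hα0 e) (hm' e).le)
  have hTleS : T ≤ S := Finset.sum_le_sum (fun e _ => by nlinarith [(hα e).2, hm' e])
  have hTge : (1 - c) * S ≤ T := by
    rw [hS, Finset.mul_sum]
    exact Finset.sum_le_sum fun e _ => by nlinarith [(hα e).1, hm' e]
  set s := Real.sqrt (1 - c) with hs
  have hs0 : 0 ≤ s := Real.sqrt_nonneg _
  have hs2 : s ^ 2 = 1 - c := Real.sq_sqrt (by linarith)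
  rcases eq_or_lt_of_le hTnn with hT0 | hTpos
  · have hc : c = 1 := by nlinarith
    have heq : ∀ e : R, |α e * m' e / T - m' e / S| = m' e / S := by
      intro e
      rw [← hT0, div_zero, zero_sub, abs_neg, abs_of_nonneg (div_nonneg (hm' e).le hSpos.le)]
    rw [Finset.sum_congr rfl (fun e _ => heq e), ← Finset.sum_div, ← hS, div_self hSpos.ne']
    have : s = 0 := by rw [hs, hc]; simp
    rw [this, hc]
    norm_num
  · have hsum0 : ∑ e : R, (α e * m' e / T - m' e / S) = 0 := by
      rw [Finset.sum_sub_distrib, ← Finset.sum_div, ← Finset.sum_div, ← hT, ← hS,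
        div_self hTpos.ne', div_self hSpos.ne', sub_self]
    have habs : ∑ e : R, |α e * m' e / T - m' e / S|
        = 2 * ∑ e : R, max (α e * m' e / T - m' e / S) 0 := by
      have h2 : ∀ x : ℝ, |x| = 2 * max x 0 - x := by
        intro x
        rcases le_or_gt 0 x with h | h
        · rw [abs_of_nonneg h, max_eq_left h]; ring
        · rw [abs_of_neg h, max_eq_right h.le]; ring
      rw [Finset.sum_congr rfl (fun e _ => h2 _), Finset.sum_sub_distrib, hsum0,
        ← Finset.mul_sum, sub_zero]
    have hpt : ∀ e : R, max (α e * m' e / T - m' e / S) 0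
        ≤ (S - T) * ((α e - (1 - c)) * m' e) / (c * S * T) := by
      intro e
      have hme := hm' e
      have h1 := (hα e).1
      have h2 := (hα e).2
      apply max_le
      · rw [div_sub_div _ _ hTpos.ne' hSpos.ne',
          div_le_div_iff₀ (mul_pos hTpos hSpos) (by positivity)]
        nlinarith [mul_nonneg (mul_nonneg (mul_nonneg
          (by linarith : (0:ℝ) ≤ 1 - α e) (by linarith : (0:ℝ) ≤ T - (1 - c) * S)) hme.le)
          (mul_pos hSpos hTpos).le]
      · exact div_nonneg (mul_nonneg (by linarith)
          (mul_nonneg (by linarith) hme.le)) (by positivity)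
    have hsum : ∑ e : R, (S - T) * ((α e - (1 - c)) * m' e) / (c * S * T)
        = (S - T) * (T - (1 - c) * S) / (c * S * T) := by
      rw [← Finset.sum_div, ← Finset.mul_sum]
      congr 2
      rw [Finset.sum_congr rfl
        (fun e _ => (by ring : (α e - (1 - c)) * m' e = α e * m' e - (1 - c) * m' e)),
        Finset.sum_sub_distrib, ← Finset.mul_sum, ← hT, ← hS]
    have hfin : (S - T) * (T - (1 - c) * S) / (c * S * T) ≤ (1 - s) ^ 2 / c := by
      rw [div_le_div_iff₀ (by positivity) hc0]
      have hid : (1 - s) ^ 2 * (c * S * T) - (S - T) * (T - (1 - c) * S) * c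
          = c * (T - s * S) ^ 2 := by
        have h1c : (1 : ℝ) - c = s ^ 2 := hs2.symm
        rw [h1c]; ring
      nlinarith [mul_nonneg hc0.le (sq_nonneg (T - s * S))]
    calc (1 / 2) * ∑ e : R, |α e * m' e / T - m' e / S|
        = ∑ e : R, max (α e * m' e / T - m' e / S) 0 := by rw [habs]; ring
      _ ≤ ∑ e : R, (S - T) * ((α e - (1 - c)) * m' e) / (c * S * T) :=
          Finset.sum_le_sum fun e _ => hpt e
      _ = (S - T) * (T - (1 - c) * S) / (c * S * T) := hsum
      _ ≤ (1 - s) ^ 2 / c := hfin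
end
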